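/- Every finite set A of n ≥ 1 positive real numbers contains a subset B with |B| ≥ H_n = Σ_{j=1}^{n} 1/j (the n-th harmonic number, which is ≥ ln n) such that b₁ + b₂ ∉ A for all distinct b₁, b₂ ∈ B. -/

import Mathlib

noncomputable def degA (A : Finset ℝ) (a : ℝ) : ℕ :=
  (A.filter (fun b => b ≠ a ∧ a + b ∈ A)).card

lemma caro_wei (A : Finset ℝ) (S : Finset ℝ) (hS : S ⊆ A) :
    ∃ B ⊆ S, (∀ b₁ ∈ B, ∀ b₂ ∈ B, b₁ ≠ b₂ → b₁ + b₂ ∉ A) ∧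
      (∑ a ∈ S, (1 : ℝ) / (degA A a + 1)) ≤ B.card := by
  induction S using Finset.strongInduction with
  | _ S ih =>
    rcases S.eq_empty_or_nonempty with rfl | hne
    · exact ⟨∅, le_refl _, by simp, by simp⟩
    obtain ⟨a, haS, hamin⟩ := S.exists_min_image (degA A) hne
    set R := S.filter (fun b => b = a ∨ a + b ∈ A) with hR
    have haR : a ∈ R := by simp [hR, haS]
    have hRS : R ⊆ S := Finset.filter_subset _ _
    have hSsub : S \ R ⊂ S := Finset.sdiff_ssubset hRS ⟨a, haR⟩
    obtain ⟨B', hB'sub, hB'ind, hB'sum⟩ := ih (S \ R) hSsub ((Finset.sdiff_subset).trans hS)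
    have haB' : a ∉ B' := fun h => by
      have := hB'sub h
      simp [Finset.mem_sdiff] at this
      exact this.2 haR
    refine ⟨insert a B', ?_, ?_, ?_⟩
    · exact Finset.insert_subset haS ((hB'sub.trans Finset.sdiff_subset))
    · intro b₁ hb₁ b₂ hb₂ hne' hsum
      have key : ∀ b ∈ B', a + b ∉ A := by
        intro b hb hAb
        have hmem := hB'sub hb
        rw [Finset.mem_sdiff] at hmem
        exact hmem.2 (by simp [hR, hmem.1, hAb])
      rcases Finset.mem_insert.mp hb₁ with h1 | h1 <;>
        rcases Finset.mem_insert.mp hb₂ with h2 | h2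
      · exact hne' (h1.trans h2.symm)
      · exact key b₂ h2 (h1 ▸ hsum)
      · exact key b₁ h1 (by rw [add_comm]; exact h2 ▸ hsum)
      · exact hB'ind b₁ h1 b₂ h2 hne' hsum
    · have hsplit : (∑ x ∈ S, (1:ℝ) / (degA A x + 1)) =
          (∑ x ∈ S \ R, (1:ℝ) / (degA A x + 1)) + (∑ x ∈ R, ((1:ℝ) / (degA A x + 1))) :=
        (Finset.sum_sdiff hRS).symm
      have hRcard : R.card ≤ degA A a + 1 := by
        have : R ⊆ insert a (A.filter (fun b => b ≠ a ∧ a + b ∈ A)) := by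
          intro b hb
          simp only [hR, Finset.mem_filter] at hb
          rcases hb.2 with rfl | hA
          · exact Finset.mem_insert_self _ _
          · by_cases hba : b = a
            · subst hba; exact Finset.mem_insert_self _ _
            · exact Finset.mem_insert_of_mem (Finset.mem_filter.mpr ⟨hS hb.1, hba, hA⟩)
        calc R.card ≤ _ := Finset.card_le_card this
          _ ≤ _ := by
            rw [degA]
            exact Finset.card_insert_le _ _
      have hRsum : (∑ x ∈ R, (1:ℝ) / (degA A x + 1)) ≤ 1 := by
        have h1 : ∀ x ∈ R, (1:ℝ) / (degA A x + 1) ≤ 1 / (degA A a + 1) := by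
          intro x hx
          apply one_div_le_one_div_of_le (by positivity)
          have := hamin x (hRS hx)
          exact_mod_cast Nat.add_le_add_right this 1
        calc (∑ x ∈ R, (1:ℝ) / (degA A x + 1)) ≤ ∑ x ∈ R, (1:ℝ) / (degA A a + 1) :=
              Finset.sum_le_sum h1
          _ = R.card * (1 / (degA A a + 1)) := by rw [Finset.sum_const, nsmul_eq_mul]
          _ ≤ (degA A a + 1) * (1 / (degA A a + 1)) := by
              apply mul_le_mul_of_nonneg_right _ (by positivity)
              exact_mod_cast hRcard
          _ = 1 := by field_simp
      rw [hsplit, Finset.card_insert_of_notMem haB']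
      push_cast
      linarith

theorem stmt_14 (n : ℕ) (hn : 1 ≤ n) (A : Finset ℝ) (hcard : A.card = n)
    (hpos : ∀ a ∈ A, 0 < a) :
    ∃ B ⊆ A, (∑ j ∈ Finset.Icc 1 n, (1 : ℝ) / j) ≤ B.card ∧
      ∀ b₁ ∈ B, ∀ b₂ ∈ B, b₁ ≠ b₂ → b₁ + b₂ ∉ A := by
  obtain ⟨B, hBA, hBind, hBsum⟩ := caro_wei A A le_rfl
  refine ⟨B, hBA, le_trans ?_ hBsum, hBind⟩
  -- define u a = number of elements of A greater than a
  set u : ℝ → ℕ := fun a => (A.filter (fun x => a < x)).card with hu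
  have hdeg : ∀ a ∈ A, degA A a ≤ u a := by
    intro a ha
    rw [degA, hu]
    apply Finset.card_le_card_of_injOn (fun b => a + b)
    · intro b hb
      simp only [Finset.coe_filter, Finset.mem_coe, Finset.mem_filter, Set.mem_setOf_eq] at hb ⊢
      exact ⟨hb.2.2, by linarith [hpos b hb.1]⟩
    · intro x _ y _ h
      exact add_left_cancel h
  have hinj : Set.InjOn u A := by
    intro x hx y hy hxy
    by_contra hne
    rcases lt_or_gt_of_ne hne with hlt | hlt
    · have : u y < u x := by
        apply Finset.card_lt_card
        constructor
        · intro z hz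
          simp only [Finset.mem_filter] at hz ⊢
          exact ⟨hz.1, lt_trans hlt hz.2⟩
        · intro hsub
          have := hsub (Finset.mem_filter.mpr ⟨hy, hlt⟩)
          simp at this
      omega
    · have : u x < u y := by
        apply Finset.card_lt_card
        constructor
        · intro z hz
          simp only [Finset.mem_filter] at hz ⊢
          exact ⟨hz.1, lt_trans hlt hz.2⟩
        · intro hsub
          have := hsub (Finset.mem_filter.mpr ⟨hx, hlt⟩)
          simp at this
      omega
  have himg : A.image u = Finset.range n := by
    apply Finset.eq_of_subset_of_card_le
    · intro k hk
      simp only [Finset.mem_image] at hk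
      obtain ⟨a, ha, rfl⟩ := hk
      rw [Finset.mem_range, ← hcard]
      apply Finset.card_lt_card
      constructor
      · exact Finset.filter_subset _ _
      · intro hsub
        have := hsub ha
        simp at this
    · rw [Finset.card_range, ← hcard]
      exact le_of_eq (Finset.card_image_of_injOn hinj).symm
  have key : (∑ j ∈ Finset.Icc 1 n, (1 : ℝ) / j) = ∑ a ∈ A, (1:ℝ) / (u a + 1) := by
    rw [← Finset.sum_image (f := fun k : ℕ => (1:ℝ)/(k+1)) (g := u) (fun x hx y hy h => hinj hx hy h),
      himg]
    rw [Finset.range_eq_Ico]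
    rw [Finset.sum_Ico_eq_sum_range]
    have : Finset.Icc 1 n = Finset.Ico 1 (n+1) := by ext x; simp only [Finset.mem_Icc, Finset.mem_Ico]; omega
    rw [this, Finset.sum_Ico_eq_sum_range]
    simp [add_comm]
  rw [key]
  apply Finset.sum_le_sum
  intro a ha
  apply one_div_le_one_div_of_le (by positivity)
  have := hdeg a ha
  exact_mod_cast Nat.add_le_add_right this 1
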